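/- For the Bolthausen–Sznitman coalescent, the series Σ_{b≥2} 1/μ(b) = Σ_{b≥2} 1/(b(H_b − 1)) diverges; hence the Bolthausen–Sznitman coalescent does not come down from infinity. -/

import Mathlib

/-- The b-th harmonic number H_b = Σ_{j=1}^b 1/j. -/
noncomputable def harmonic' (b : ℕ) : ℝ := ∑ j ∈ Finset.Icc 1 b, (1 : ℝ) / j

lemma harmonic'_succ (n : ℕ) : harmonic' (n + 1) = harmonic' n + 1 / (n + 1) := by
  rw [harmonic', Finset.sum_Icc_succ_top (Nat.le_add_left 1 n)]
  push_cast
  rfl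

lemma harmonic'_eq (n : ℕ) : harmonic' n = (harmonic n : ℝ) := by
  rw [harmonic', harmonic_eq_sum_Icc]
  push_cast
  simp [one_div]

lemma log_le_harmonic' (n : ℕ) : Real.log (n + 1) ≤ harmonic' n := by
  rw [harmonic'_eq]
  have := log_add_one_le_harmonic n
  push_cast at this ⊢
  exact this

lemma harmonic'_sub_one_pos (n : ℕ) : 0 < harmonic' (n + 2) - 1 := by
  induction n with
  | zero =>
      rw [show (0 + 2 : ℕ) = 0 + 1 + 1 from rfl, harmonic'_succ, harmonic'_succ]
      norm_num [harmonic']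
  | succ k ih =>
      rw [harmonic'_succ]
      have h1 : (0:ℝ) < 1 / ((k:ℝ) + 2 + 1) := by positivity
      push_cast
      linarith

/-- For the Bolthausen–Sznitman coalescent, Σ_{b≥2} 1/μ(b) = Σ_{b≥2} 1/(b(H_b - 1))
diverges: the coalescent does not come down from infinity. -/
theorem bolthausen_sznitman_not_cdi :
    ¬ Summable (fun b : ℕ => 1 / (((b : ℝ) + 2) * (harmonic' (b + 2) - 1))) := by
  intro h
  set f : ℕ → ℝ := fun b => 1 / (((b : ℝ) + 2) * (harmonic' (b + 2) - 1)) with hf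
  set G : ℕ → ℝ := fun b => harmonic' (b + 2) - 1 with hG
  have hGpos : ∀ b, 0 < G b := fun b => harmonic'_sub_one_pos b
  have hfnonneg : ∀ b, 0 ≤ f b := by
    intro b
    have := hGpos b
    have : (0:ℝ) < ((b:ℝ) + 2) * G b := by positivity
    positivity
  -- key step: log G (b+1) - log G b ≤ f b
  have key : ∀ b, Real.log (G (b + 1)) - Real.log (G b) ≤ f b := by
    intro b
    have hGb := hGpos b
    have hstep : G (b + 1) = G b + 1 / ((b : ℝ) + 3) := by
      simp only [hG]
      rw [show b + 1 + 2 = (b + 2) + 1 from rfl, harmonic'_succ]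
      push_cast; ring
    have hratio : 0 < G (b + 1) / G b := div_pos (hGpos (b+1)) hGb
    have hlog : Real.log (G (b + 1) / G b) ≤ G (b + 1) / G b - 1 :=
      Real.log_le_sub_one_of_pos hratio
    rw [Real.log_div (hGpos (b+1)).ne' hGb.ne'] at hlog
    have heq : G (b + 1) / G b - 1 = (1 / ((b : ℝ) + 3)) / G b := by
      rw [hstep]; field_simp; ring
    rw [heq] at hlog
    refine hlog.trans ?_
    rw [hf]
    simp only
    rw [div_div, one_div, one_div]
    apply inv_anti₀
    · positivity
    · have hGdef : harmonic' (b + 2) - 1 = G b := rfl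
      rw [hGdef]
      nlinarith [hGb]
  -- partial sums are bounded
  have hbound : ∀ n, Real.log (G n) - Real.log (G 0) ≤ ∑' b, f b := by
    intro n
    calc Real.log (G n) - Real.log (G 0)
        = ∑ b ∈ Finset.range n, (Real.log (G (b+1)) - Real.log (G b)) := by
          rw [Finset.sum_range_sub (fun b => Real.log (G b))]
      _ ≤ ∑ b ∈ Finset.range n, f b := Finset.sum_le_sum (fun b _ => key b)
      _ ≤ ∑' b, f b := Summable.sum_le_tsum _ (fun b _ => hfnonneg b) h
  -- but log (G n) → ∞
  have hGtop : Filter.Tendsto G Filter.atTop Filter.atTop := by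
    have h0 : Filter.Tendsto (fun n : ℕ => (n : ℝ) + 3) Filter.atTop Filter.atTop :=
      Filter.tendsto_atTop_add_const_right _ 3 tendsto_natCast_atTop_atTop
    have h1 : Filter.Tendsto (fun n : ℕ => Real.log ((n : ℝ) + 3) + (-1))
        Filter.atTop Filter.atTop :=
      Filter.tendsto_atTop_add_const_right _ (-1) (Real.tendsto_log_atTop.comp h0)
    apply Filter.tendsto_atTop_mono _ h1
    intro n
    have h2 := log_le_harmonic' (n + 2)
    push_cast at h2
    rw [show ((n : ℝ) + 2 + 1) = (n : ℝ) + 3 by ring] at h2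
    simp only [hG]
    linarith
  have hlogtop : Filter.Tendsto (fun n => Real.log (G n) - Real.log (G 0))
      Filter.atTop Filter.atTop :=
    Filter.tendsto_atTop_add_const_right _ _ (Real.tendsto_log_atTop.comp hGtop)
  obtain ⟨n, hn⟩ := (hlogtop.eventually_gt_atTop (∑' b, f b)).exists
  exact absurd (hbound n) (not_le.mpr hn)
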